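/- The function f(x) = x²/2 − l_{σ,c}(x) is convex on ℝ, where l_{σ,c} is the HOW function. -/

import Mathlib

open Real Set

/-- The hybrid ordinary-Welsch (HOW) function with parameters `σ, c > 0`. -/
noncomputable def how (σ c x : ℝ) : ℝ :=
  if |x| ≤ c then x ^ 2 / 2
  else σ ^ 2 / 2 * (1 - Real.exp ((c ^ 2 - x ^ 2) / σ ^ 2)) + c ^ 2 / 2

namespace HowAux

variable (σ c : ℝ)

/-- The "outer branch" of `x²/2 - how`. -/
noncomputable def G (x : ℝ) : ℝ :=
  x ^ 2 / 2 - (σ ^ 2 / 2 * (1 - Real.exp ((c ^ 2 - x ^ 2) / σ ^ 2)) + c ^ 2 / 2)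

/-- The derivative of `x²/2 - how`. -/
noncomputable def D' (x : ℝ) : ℝ := x * max 0 (1 - Real.exp ((c ^ 2 - x ^ 2) / σ ^ 2))

lemma hasDerivAt_G (hσ : 0 < σ) (x : ℝ) :
    HasDerivAt (G σ c) (x * (1 - Real.exp ((c ^ 2 - x ^ 2) / σ ^ 2))) x := by
  have hσ2 : (σ:ℝ) ^ 2 ≠ 0 := by positivity
  have h1 : HasDerivAt (fun x : ℝ => (c ^ 2 - x ^ 2) / σ ^ 2) (-(2 * x) / σ ^ 2) x := by
    have : HasDerivAt (fun x : ℝ => c ^ 2 - x ^ 2) (-(2 * x)) x := by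
      simpa using ((hasDerivAt_pow 2 x).const_sub (c ^ 2))
    exact this.div_const _
  have h2 := h1.exp
  have h3 : HasDerivAt (fun x : ℝ => x ^ 2 / 2) x x := by
    simpa using (hasDerivAt_pow 2 x).div_const 2
  have := h3.sub ((((h2.const_sub 1).const_mul (σ ^ 2 / 2)).add_const (c ^ 2 / 2)))
  refine this.congr_deriv ?_
  field_simp

lemma D'_inner (hσ : 0 < σ) {x : ℝ} (hx : |x| < c) : D' σ c x = 0 := by
  have h2 : x ^ 2 < c ^ 2 := by
    rw [← sq_abs x]
    exact pow_lt_pow_left₀ hx (abs_nonneg x) two_ne_zero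
  have hpos : 0 < (c ^ 2 - x ^ 2) / σ ^ 2 := div_pos (by linarith) (by positivity)
  have h1 : (1:ℝ) < Real.exp ((c ^ 2 - x ^ 2) / σ ^ 2) := by
    calc (1:ℝ) = Real.exp 0 := Real.exp_zero.symm
    _ < _ := Real.exp_lt_exp.mpr hpos
  have hmax : max 0 (1 - Real.exp ((c ^ 2 - x ^ 2) / σ ^ 2)) = 0 :=
    max_eq_left (by linarith)
  simp [D', hmax]

lemma D'_outer (hσ : 0 < σ) {x : ℝ} (hx : c ≤ |x|) (hc : 0 ≤ c) :
    D' σ c x = x * (1 - Real.exp ((c ^ 2 - x ^ 2) / σ ^ 2)) := by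
  have h2 : c ^ 2 ≤ x ^ 2 := by
    rw [← sq_abs x]
    exact pow_le_pow_left₀ hc hx 2
  have hle : (c ^ 2 - x ^ 2) / σ ^ 2 ≤ 0 :=
    div_nonpos_of_nonpos_of_nonneg (by linarith) (by positivity)
  have h1 : Real.exp ((c ^ 2 - x ^ 2) / σ ^ 2) ≤ 1 := by
    calc Real.exp ((c ^ 2 - x ^ 2) / σ ^ 2) ≤ Real.exp 0 := Real.exp_le_exp.mpr hle
    _ = 1 := Real.exp_zero
  have hmax : max 0 (1 - Real.exp ((c ^ 2 - x ^ 2) / σ ^ 2))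
      = 1 - Real.exp ((c ^ 2 - x ^ 2) / σ ^ 2) := max_eq_right (by linarith)
  simp [D', hmax]

lemma mono_D' (hc : 0 < c) : Monotone (D' σ c) := by
  set m : ℝ → ℝ := fun x => max 0 (1 - Real.exp ((c ^ 2 - x ^ 2) / σ ^ 2)) with hm
  have hm0 : ∀ x, 0 ≤ m x := fun x => le_max_left _ _
  have hmono : ∀ a b : ℝ, a ^ 2 ≤ b ^ 2 → m a ≤ m b := by
    intro a b hab
    apply max_le_max le_rfl
    have : Real.exp ((c ^ 2 - b ^ 2) / σ ^ 2) ≤ Real.exp ((c ^ 2 - a ^ 2) / σ ^ 2) := by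
      apply Real.exp_le_exp.mpr
      rcases eq_or_ne σ 0 with h | h
      · simp [h]
      · apply div_le_div_of_nonneg_right ?_ ?_ |>.trans_eq rfl
        · linarith
        · positivity
    linarith
  intro a b hab
  show a * m a ≤ b * m b
  rcases le_total 0 a with ha | ha
  · have hb : 0 ≤ b := ha.trans hab
    exact mul_le_mul hab (hmono a b (by nlinarith)) (hm0 a) hb
  · rcases le_total b 0 with hb | hb
    · have h1 : (-b) * m b ≤ (-a) * m a :=
        mul_le_mul (by linarith) (hmono b a (by nlinarith)) (hm0 b) (by linarith)
      linarith
    · have h1 : a * m a ≤ 0 := mul_nonpos_of_nonpos_of_nonneg ha (hm0 a)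
      have h2 : 0 ≤ b * m b := mul_nonneg hb (hm0 b)
      linarith

end HowAux

open HowAux in
/-- `x ↦ x²/2 − l_{σ,c}(x)` is convex on ℝ, where `l_{σ,c}` is HOW. -/
theorem how_quadratic_minus_convex (σ c : ℝ) (hσ : 0 < σ) (hc : 0 < c) :
    ConvexOn ℝ Set.univ (fun x : ℝ => x ^ 2 / 2 - how σ c x) := by
  set g : ℝ → ℝ := fun x => x ^ 2 / 2 - how σ c x with hg
  have hg0 : ∀ x, |x| ≤ c → g x = 0 := by
    intro x hx; simp [hg, how, hx]
  have hgGc : ∀ x, c ≤ |x| → g x = G σ c x := by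
    intro x hx
    rcases eq_or_lt_of_le hx with h | h
    · have hx' : |x| ≤ c := h.ge
      rw [hg0 x hx']
      have hxc : x ^ 2 = c ^ 2 := by rw [← sq_abs, ← h]
      simp [G, hxc]
    · have hx' : ¬ |x| ≤ c := not_le.mpr h
      simp [hg, how, hx', G]
  have key : ∀ x, HasDerivAt g (D' σ c x) x := by
    intro x
    rcases lt_trichotomy (|x|) c with h | h | h
    · -- inner open region
      rw [D'_inner σ c hσ h]
      have hev : g =ᶠ[nhds x] (fun _ => 0) := by
        have hop : IsOpen {y : ℝ | |y| < c} := isOpen_lt (continuous_abs) continuous_const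
        filter_upwards [hop.mem_nhds h] with y hy
        exact hg0 y (le_of_lt hy)
      exact (hasDerivAt_const x (0:ℝ)).congr_of_eventuallyEq hev
    · -- boundary: x = c or x = -c
      have hD0 : D' σ c x = 0 := by
        have hxc : x ^ 2 = c ^ 2 := by rw [← sq_abs, h]
        simp [D', hxc]
      rw [hD0]
      have hGder : HasDerivAt (G σ c) 0 x := by
        have := hasDerivAt_G σ c hσ x
        have hxc : x ^ 2 = c ^ 2 := by rw [← sq_abs, h]
        simpa [hxc] using this
      rcases (abs_eq hc.le).mp h with h' | h'
      · -- x = c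
        rw [h'] at hGder ⊢
        have hIci : HasDerivWithinAt g 0 (Ici c) c := by
          apply hGder.hasDerivWithinAt.congr
          · intro y hy
            exact hgGc y ((le_abs_self y).trans' hy)
          · exact hgGc c (le_abs_self c)
        have hIic : HasDerivWithinAt g 0 (Iic c) c := by
          have hev : g =ᶠ[nhdsWithin c (Iic c)] (fun _ => 0) := by
            have h1 : ∀ᶠ y in nhds c, -c < y :=
              eventually_gt_nhds (by linarith)
            filter_upwards [nhdsWithin_le_nhds h1, self_mem_nhdsWithin] with y hy1 hy2
            exact hg0 y (abs_le.mpr ⟨hy1.le, hy2⟩)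
          exact (hasDerivWithinAt_const c (Iic c) 0).congr_of_eventuallyEq hev
            (hg0 c (by rw [abs_of_pos hc]))
        have := hIic.union hIci
        rw [Iic_union_Ici] at this
        exact hasDerivWithinAt_univ.mp this
      · -- x = -c
        rw [h'] at hGder ⊢
        have hIic : HasDerivWithinAt g 0 (Iic (-c)) (-c) := by
          apply hGder.hasDerivWithinAt.congr
          · intro y hy
            exact hgGc y ((neg_le_abs y).trans' (by linarith [mem_Iic.mp hy]))
          · exact hgGc (-c) (by rw [abs_neg, abs_of_pos hc])
        have hIci : HasDerivWithinAt g 0 (Ici (-c)) (-c) := by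
          have hev : g =ᶠ[nhdsWithin (-c) (Ici (-c))] (fun _ => 0) := by
            have h1 : ∀ᶠ y in nhds (-c), y < c :=
              eventually_lt_nhds (by linarith)
            filter_upwards [nhdsWithin_le_nhds h1, self_mem_nhdsWithin] with y hy1 hy2
            exact hg0 y (abs_le.mpr ⟨hy2, hy1.le⟩)
          exact (hasDerivWithinAt_const (-c) (Ici (-c)) 0).congr_of_eventuallyEq hev
            (hg0 (-c) (by rw [abs_neg, abs_of_pos hc]))
        have := hIic.union hIci
        rw [Iic_union_Ici] at this
        exact hasDerivWithinAt_univ.mp this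
    · -- outer open region
      rw [D'_outer σ c hσ h.le hc.le]
      have hev : g =ᶠ[nhds x] G σ c := by
        have hop : IsOpen {y : ℝ | c < |y|} := isOpen_lt continuous_const continuous_abs
        filter_upwards [hop.mem_nhds h] with y hy
        exact hgGc y hy.le
      exact (hasDerivAt_G σ c hσ x).congr_of_eventuallyEq hev
  have hdiff : Differentiable ℝ g := fun x => (key x).differentiableAt
  have hderiv : deriv g = D' σ c := funext fun x => (key x).deriv
  exact Monotone.convexOn_univ_of_deriv hdiff (hderiv ▸ mono_D' σ c hc)
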